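/- Let n ≥ 4, R > 0 and Ω = B_R ⊂ ℝⁿ. Then there exists a constant C > 0 depending only on n and R with the following property: if u ∈ C⁰(Ω̄) and w ∈ C²(Ω̄) are nonnegative radially symmetric functions satisfying −Δw + w = u in Ω, ∂_ν w = 0 on ∂Ω, and ∫_Ω u dx = m, then w(x) + |x · ∇w(x)| ≤ C m / |x|^{n−2} for all x with 0 < |x| ≤ R. -/

import Mathlib

open MeasureTheory Metric Set Filter

noncomputable section

abbrev En (n : ℕ) := EuclideanSpace ℝ (Fin n)

/-- partial derivative of `f` in the `i`-th coordinate direction -/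
def pd {n : ℕ} (f : En n → ℝ) (i : Fin n) (x : En n) : ℝ :=
  fderiv ℝ f x (EuclideanSpace.single i 1)

/-- Laplacian of `f` -/
def lap {n : ℕ} (f : En n → ℝ) (x : En n) : ℝ :=
  ∑ i, pd (pd f i) i x

/-- `f` is radially symmetric on the closed ball of radius `R` -/
def radial {n : ℕ} (R : ℝ) (f : En n → ℝ) : Prop :=
  ∀ x ∈ closedBall (0 : En n) R, ∀ y ∈ closedBall (0 : En n) R, ‖x‖ = ‖y‖ → f x = f y

namespace PointwiseAux

lemma left_deriv_unique {f g : ℝ → ℝ} {a b : ℝ} (hf : HasDerivAt f a 0)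
    (hg : HasDerivAt g b 0) (h : f =ᶠ[nhdsWithin (0:ℝ) (Iic 0)] g) : a = b := by
  have hu : UniqueDiffWithinAt ℝ (Iic (0:ℝ)) 0 := uniqueDiffOn_Iic 0 0 self_mem_Iic
  have hfW : HasDerivWithinAt f a (Iic 0) 0 := hf.hasDerivWithinAt
  have hgW : HasDerivWithinAt f b (Iic 0) 0 :=
    (hg.hasDerivWithinAt).congr_of_eventuallyEq h (h.self_of_nhdsWithin self_mem_Iic)
  exact hu.eq_deriv _ hfW hgW

variable {n : ℕ}

lemma line_hasDerivAt (x v : En n) (t : ℝ) :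
    HasDerivAt (fun t : ℝ => x + t • v) v t := by
  simpa using ((hasDerivAt_id t).smul_const v).const_add x

lemma pd_contDiff {w : En n → ℝ} (hw : ContDiff ℝ 2 w) (i : Fin n) :
    ContDiff ℝ 1 (pd w i) := by
  have h1 : ContDiff ℝ 1 (fderiv ℝ w) := hw.fderiv_right (by norm_num)
  exact (ContinuousLinearMap.apply ℝ ℝ (EuclideanSpace.single i 1)).contDiff.comp h1

lemma deriv_along_line {w : En n → ℝ} (hw : ContDiff ℝ 2 w) (i : Fin n) (x : En n) (t : ℝ) :
    HasDerivAt (fun t : ℝ => w (x + t • EuclideanSpace.single i 1))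
      (pd w i (x + t • EuclideanSpace.single i 1)) t := by
  have hdw := (hw.differentiable (by norm_num)) (x + t • EuclideanSpace.single i 1)
  exact hdw.hasFDerivAt.comp_hasDerivAt t (line_hasDerivAt x _ t)

lemma pd2_along_line {w : En n → ℝ} (hw : ContDiff ℝ 2 w) (i : Fin n) (x : En n) :
    HasDerivAt (deriv (fun t : ℝ => w (x + t • EuclideanSpace.single i 1)))
      (pd (pd w i) i x) 0 := by
  have h1 : deriv (fun t : ℝ => w (x + t • EuclideanSpace.single i 1))
      = fun t => pd w i (x + t • EuclideanSpace.single i 1) := by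
    funext t; exact (deriv_along_line hw i x t).deriv
  rw [h1]
  have hd : DifferentiableAt ℝ (pd w i) x :=
    ((pd_contDiff hw i).differentiable (by norm_num)) x
  have hx : x = x + (0:ℝ) • EuclideanSpace.single i 1 := by simp
  rw [hx] at hd
  have := hd.hasFDerivAt.comp_hasDerivAt 0 (line_hasDerivAt x (EuclideanSpace.single i 1) 0)
  simpa [pd, Function.comp_def] using this

end PointwiseAux

open PointwiseAux in
set_option maxHeartbeats 1600000 in
theorem pointwise_estimate_w
    (n : ℕ) (hn : 4 ≤ n) (R : ℝ) (hR : 0 < R) :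
    ∃ C > (0 : ℝ), ∀ (m : ℝ) (u w : En n → ℝ),
      ContinuousOn u (closedBall (0 : En n) R) →
      ContDiff ℝ 2 w →
      (∀ x ∈ closedBall (0 : En n) R, 0 ≤ u x ∧ 0 ≤ w x) →
      radial R u → radial R w →
      (∀ x ∈ ball (0 : En n) R, -lap w x + w x = u x) →
      (∀ x : En n, ‖x‖ = R → (inner ℝ (gradient w x) x : ℝ) = 0) →
      (∫ x in ball (0 : En n) R, u x) = m →
      ∀ x : En n, 0 < ‖x‖ → ‖x‖ ≤ R →
        w x + |(inner ℝ x (gradient w x) : ℝ)| ≤ C * m / ‖x‖ ^ ((n : ℝ) - 2) := by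
  classical
  haveI : NeZero n := ⟨by omega⟩
  have hfr : Module.finrank ℝ (En n) = n := finrank_euclideanSpace_fin
  set V : ℝ := (volume (ball (0 : En n) 1)).toReal with hVdef
  have hV : 0 < V := by
    apply ENNReal.toReal_pos
    · exact (measure_ball_pos volume 0 one_pos).ne'
    · exact measure_ball_lt_top.ne
  set σ : ℝ := n * V with hσdef
  have hσ : 0 < σ := by positivity
  have hRn : (0:ℝ) < R^n - (R/2)^n := by
    have : (R/2)^n < R^n := by
      apply pow_lt_pow_left₀ (by linarith) (by positivity)
      omega
    linarith
  set c₀ : ℝ := n / (R^n - (R/2)^n) with hc₀def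
  have hc₀ : 0 < c₀ := by positivity
  have hn2 : (0:ℝ) < (n:ℝ) - 2 := by
    have : (4:ℝ) ≤ n := by exact_mod_cast hn
    linarith
  set C : ℝ := (c₀ * R^(n-2) + 2^(n-1) * 2 / ((n:ℝ)-2) + 2) / σ with hCdef
  have hC : 0 < C := by positivity
  refine ⟨C, hC, ?_⟩
  intro m u w hu hw hnn hru hrw hpde hneu hm
  set e₀ : En n := EuclideanSpace.single (0:Fin n) (1:ℝ) with he₀
  have he₀n : ‖e₀‖ = 1 := by simp [he₀, EuclideanSpace.norm_single]
  have hmem : ∀ r : ℝ, |r| ≤ R → r • e₀ ∈ closedBall (0:En n) R := by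
    intro r hr
    simp only [mem_closedBall, dist_eq_norm, sub_zero, norm_smul, he₀n, mul_one]
    exact hr
  set q : ℝ → ℝ := fun s => w (Real.sqrt s • e₀) with hqdef
  set φ : ℝ → ℝ := fun r => w (r • e₀) with hφdef
  set υ : ℝ → ℝ := fun r => u (r • e₀) with hυdef
  have hqφ : ∀ r : ℝ, 0 ≤ r → q (r^2) = φ r := by
    intro r hr; simp only [hqdef, hφdef, Real.sqrt_sq hr]
  have hwdiff : Differentiable ℝ w := hw.differentiable (by norm_num)
  have hval : ∀ x : En n, ‖x‖ ≤ R → w x = q (‖x‖^2) := by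
    intro x hx
    have h1 : q (‖x‖^2) = w (‖x‖ • e₀) := by
      simp only [hqdef, Real.sqrt_sq (norm_nonneg x)]
    rw [h1]
    apply hrw x _ (‖x‖ • e₀) (hmem _ (by rwa [abs_of_nonneg (norm_nonneg x)]))
    · rw [norm_smul, he₀n, mul_one, Real.norm_eq_abs, abs_of_nonneg (norm_nonneg x)]
    · simpa [mem_closedBall, dist_eq_norm] using hx
  -- smoothness of q on (0, ∞)
  have hγ : ∀ s : ℝ, s ≠ 0 → ContDiffAt ℝ 2 (fun s : ℝ => Real.sqrt s • e₀) s := by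
    intro s hs
    exact (Real.contDiffAt_sqrt hs).smul contDiffAt_const
  have hq : ContDiffOn ℝ 2 q (Ioi 0) := by
    intro s hs
    exact ((hw.contDiffAt.comp s (hγ s (ne_of_gt hs))).contDiffWithinAt)
  have hq1 : ContDiffOn ℝ 1 (deriv q) (Ioi 0) :=
    hq.deriv_of_isOpen isOpen_Ioi (by norm_num)
  have hqd : ∀ s ∈ Ioi (0:ℝ), HasDerivAt q (deriv q s) s := fun s hs =>
    ((hq.differentiableOn (by norm_num)).differentiableAt
      (isOpen_Ioi.mem_nhds hs)).hasDerivAt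
  have hq'd : ∀ s ∈ Ioi (0:ℝ), HasDerivAt (deriv q) (deriv (deriv q) s) s := fun s hs =>
    ((hq1.differentiableOn (by norm_num)).differentiableAt (isOpen_Ioi.mem_nhds hs)).hasDerivAt
  have hq'cont : ContinuousOn (deriv q) (Ioi 0) := hq1.continuousOn
  -- gradient identity
  have hgrad : ∀ x : En n, 0 < ‖x‖ → ‖x‖ ≤ R →
      (inner ℝ (gradient w x) x : ℝ) = 2*‖x‖^2 * deriv q (‖x‖^2) := by
    intro x hx0 hxR
    have hr2 : (0:ℝ) < ‖x‖^2 := by positivity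
    have hinner : (inner ℝ (gradient w x) x : ℝ) = fderiv ℝ w x x :=
      InnerProductSpace.toDual_symm_apply
    have hfd : HasDerivAt (fun t:ℝ => w (x + t • x)) (fderiv ℝ w x x) 0 := by
      have := (hwdiff (x + (0:ℝ) • x)).hasFDerivAt.comp_hasDerivAt 0 (line_hasDerivAt x x 0)
      simpa [Function.comp_def] using this
    have hp : HasDerivAt (fun t:ℝ => (1+t)^2 * ‖x‖^2) (2*‖x‖^2) 0 := by
      have h1 : HasDerivAt (fun t:ℝ => 1+t) 1 0 := by
        simpa using (hasDerivAt_id (0:ℝ)).const_add 1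
      have h2 := (h1.pow 2).mul_const (‖x‖^2)
      simpa using h2
    have hgd : HasDerivAt (fun t:ℝ => q ((1+t)^2 * ‖x‖^2)) (deriv q (‖x‖^2) * (2*‖x‖^2)) 0 := by
      have hq0 : HasDerivAt q (deriv q (‖x‖^2)) ((1+(0:ℝ))^2 * ‖x‖^2) := by
        have : ((1+(0:ℝ))^2 * ‖x‖^2) = ‖x‖^2 := by ring
        rw [this]; exact hqd _ hr2
      exact hq0.comp 0 hp
    have heq : (fun t:ℝ => w (x + t • x)) =ᶠ[nhdsWithin (0:ℝ) (Iic 0)]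
        fun t => q ((1+t)^2 * ‖x‖^2) := by
      filter_upwards [Ioc_mem_nhdsLE_of_mem (show (0:ℝ) ∈ Ioc (-1:ℝ) 0 by constructor <;> norm_num)] with t ht
      have h1t : 0 ≤ 1 + t := by linarith [ht.1]
      have h1t' : 1 + t ≤ 1 := by linarith [ht.2]
      have hxt : x + t • x = (1+t) • x := by rw [add_smul, one_smul]
      have hnorm : ‖x + t • x‖ = (1+t) * ‖x‖ := by
        rw [hxt, norm_smul, Real.norm_eq_abs, abs_of_nonneg h1t]
      have hle : ‖x + t • x‖ ≤ R := by
        rw [hnorm]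
        calc (1+t) * ‖x‖ ≤ 1 * ‖x‖ := by
              apply mul_le_mul_of_nonneg_right h1t' (norm_nonneg x)
          _ ≤ R := by rw [one_mul]; exact hxR
      rw [hval _ hle, hnorm]
      ring_nf
    have := left_deriv_unique hfd hgd heq
    rw [hinner, this]; ring
  have hneu' : deriv q (R^2) = 0 := by
    have hxR : ‖R • e₀‖ = R := by
      rw [norm_smul, he₀n, mul_one, Real.norm_eq_abs, abs_of_pos hR]
    have h1 := hneu (R • e₀) hxR
    have h2 := hgrad (R • e₀) (by rw [hxR]; exact hR) (by rw [hxR])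
    rw [hxR] at h2
    rw [h1] at h2
    have hR2 : (2*R^2 : ℝ) ≠ 0 := by positivity
    rcases mul_eq_zero.1 h2.symm with h | h
    · exact absurd h (by positivity)
    · exact h
  -- norm square identity
  have hnormsq : ∀ (r t : ℝ) (i : Fin n), i ≠ 0 →
      ‖r • e₀ + t • EuclideanSpace.single i (1:ℝ)‖^2 = r^2 + t^2 := by
    intro r t i hi
    rw [norm_add_sq_real]
    have h2 : ‖EuclideanSpace.single i (1:ℝ)‖ = 1 := by
      simp [EuclideanSpace.norm_single]
    have h3 : (inner ℝ (r • e₀) (t • EuclideanSpace.single i (1:ℝ)) : ℝ) = 0 := by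
      rw [real_inner_smul_left, real_inner_smul_right, he₀, EuclideanSpace.inner_single_left]
      simp [EuclideanSpace.single_apply, Ne.symm hi]
    rw [norm_smul, norm_smul, he₀n, h2, h3]
    simp [mul_pow, sq_abs]
  -- Laplacian identity
  have hlap : ∀ r : ℝ, 0 < r → r < R →
      lap w (r • e₀) = 4*r^2 * deriv (deriv q) (r^2) + 2*(n:ℝ) * deriv q (r^2) := by
    intro r hr0 hrR
    have hr2 : (0:ℝ) < r^2 := by positivity
    have hkey : ∀ i : Fin n, i ≠ 0 → pd (pd w i) i (r • e₀) = 2 * deriv q (r^2) := by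
      intro i hi
      have hpd2 := pd2_along_line hw i (r • e₀)
      have htarget : HasDerivAt (fun t:ℝ => deriv q (r^2 + t^2) * (2*t))
          (2 * deriv q (r^2)) 0 := by
        have hin : HasDerivAt (fun t:ℝ => r^2 + t^2) 0 0 := by
          simpa using ((hasDerivAt_pow 2 (0:ℝ)).const_add (r^2))
        have h0 : HasDerivAt (deriv q) (deriv (deriv q) (r^2)) (r^2 + 0^2) := by
          have he : (r^2 + 0^2 : ℝ) = r^2 := by ring
          rw [he]
          exact hq'd _ hr2
        have hf : HasDerivAt (fun t:ℝ => deriv q (r^2 + t^2))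
            (deriv (deriv q) (r^2) * 0) 0 := by simpa [Function.comp_def] using h0.comp 0 hin
        have hg : HasDerivAt (fun t:ℝ => 2*t) 2 0 := by
          simpa using (hasDerivAt_id (0:ℝ)).const_mul 2
        have hmul := hf.mul hg
        norm_num at hmul
        exact hmul.congr_deriv (by ring)
      have δpos : (0:ℝ) < R^2 - r^2 := by nlinarith
      have hδ : (0:ℝ) < Real.sqrt (R^2 - r^2) := Real.sqrt_pos.2 δpos
      have heq0 : (fun t : ℝ => w (r • e₀ + t • EuclideanSpace.single i 1))
          =ᶠ[nhds (0:ℝ)] (fun t => q (r^2 + t^2)) := by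
        filter_upwards [Ioo_mem_nhds (neg_neg_iff_pos.2 hδ) hδ] with t ht
        have habs : |t| < Real.sqrt (R^2 - r^2) := abs_lt.2 ⟨ht.1, ht.2⟩
        have ht2 : t^2 < R^2 - r^2 := by
          calc t^2 = |t|^2 := (sq_abs t).symm
            _ < (Real.sqrt (R^2-r^2))^2 := by
                exact pow_lt_pow_left₀ habs (abs_nonneg t) (by norm_num)
            _ = R^2 - r^2 := Real.sq_sqrt δpos.le
        have hnorm := hnormsq r t i hi
        have hle : ‖r • e₀ + t • EuclideanSpace.single i (1:ℝ)‖ ≤ R := by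
          nlinarith [norm_nonneg (r • e₀ + t • EuclideanSpace.single i (1:ℝ))]
        rw [hval _ hle, hnorm]
      have hrhs : ∀ t : ℝ, deriv (fun s : ℝ => q (r^2 + s^2)) t
          = deriv q (r^2+t^2) * (2*t) := by
        intro t
        have hin : HasDerivAt (fun s:ℝ => r^2 + s^2) (2*t) t := by
          simpa using ((hasDerivAt_pow 2 t).const_add (r^2))
        have hpos : (0:ℝ) < r^2 + t^2 := by positivity
        exact ((hqd _ hpos).comp t hin).deriv
      have hD : HasDerivAt (deriv (fun t : ℝ => w (r • e₀ + t • EuclideanSpace.single i 1)))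
          (2 * deriv q (r^2)) 0 := by
        apply htarget.congr_of_eventuallyEq
        refine heq0.deriv.trans ?_
        exact Filter.Eventually.of_forall hrhs
      exact hpd2.unique hD
    have hkey0 : pd (pd w 0) 0 (r • e₀)
        = 4*r^2 * deriv (deriv q) (r^2) + 2 * deriv q (r^2) := by
      have hpd2 := pd2_along_line hw (0 : Fin n) (r • e₀)
      have htarget : HasDerivAt (fun t:ℝ => deriv q ((r+t)^2) * (2*(r+t)))
          (4*r^2 * deriv (deriv q) (r^2) + 2 * deriv q (r^2)) 0 := by
        have hin : HasDerivAt (fun t:ℝ => (r+t)^2) (2*r) 0 := by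
          have h1 : HasDerivAt (fun t:ℝ => r+t) 1 0 := by
            simpa using (hasDerivAt_id (0:ℝ)).const_add r
          simpa [Pi.pow_def] using h1.pow 2
        have h0 : HasDerivAt (deriv q) (deriv (deriv q) (r^2)) ((r+0)^2) := by
          have he : ((r+0)^2 : ℝ) = r^2 := by ring
          rw [he]
          exact hq'd _ hr2
        have hf : HasDerivAt (fun t:ℝ => deriv q ((r+t)^2))
            (deriv (deriv q) (r^2) * (2*r)) 0 := by simpa [Function.comp_def] using h0.comp 0 hin
        have hg : HasDerivAt (fun t:ℝ => 2*(r+t)) 2 0 := by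
          have h1 : HasDerivAt (fun t:ℝ => r+t) 1 0 := by
            simpa using (hasDerivAt_id (0:ℝ)).const_add r
          simpa using h1.const_mul 2
        have hmul := hf.mul hg
        norm_num at hmul
        exact hmul.congr_deriv (by ring)
      have heq0 : (fun t : ℝ => w (r • e₀ + t • EuclideanSpace.single (0:Fin n) 1))
          =ᶠ[nhds (0:ℝ)] (fun t => q ((r+t)^2)) := by
        filter_upwards [Ioo_mem_nhds (neg_neg_iff_pos.2 hr0) hr0] with t ht
        have hsum : r • e₀ + t • EuclideanSpace.single (0:Fin n) (1:ℝ) = (r+t) • e₀ := by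
          rw [he₀, add_smul]
        rw [hsum]
        have h1 : q ((r+t)^2) = w ((r+t) • e₀) := by
          simp only [hqdef, Real.sqrt_sq (by linarith [ht.1] : (0:ℝ) ≤ r+t)]
        rw [h1]
      have hrhs : ∀ᶠ t : ℝ in nhds 0, deriv (fun s : ℝ => q ((r+s)^2)) t
          = deriv q ((r+t)^2) * (2*(r+t)) := by
        filter_upwards [Ioo_mem_nhds (neg_neg_iff_pos.2 hr0) hr0] with t ht
        have hin : HasDerivAt (fun s:ℝ => (r+s)^2) (2*(r+t)) t := by
          have h1 : HasDerivAt (fun s:ℝ => r+s) 1 t := by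
            simpa using (hasDerivAt_id (t:ℝ)).const_add r
          simpa [Pi.pow_def] using h1.pow 2
        have hpos : (0:ℝ) < (r+t)^2 := by nlinarith [ht.1]
        exact ((hqd _ hpos).comp t hin).deriv
      have hD : HasDerivAt
          (deriv (fun t : ℝ => w (r • e₀ + t • EuclideanSpace.single (0:Fin n) 1)))
          (4*r^2 * deriv (deriv q) (r^2) + 2 * deriv q (r^2)) 0 := by
        apply htarget.congr_of_eventuallyEq
        exact heq0.deriv.trans hrhs
      exact hpd2.unique hD
    have hsplit : lap w (r • e₀) = pd (pd w 0) 0 (r•e₀)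
        + ∑ i ∈ Finset.univ.erase (0 : Fin n), pd (pd w i) i (r•e₀) := by
      rw [lap]
      exact (Finset.add_sum_erase _ _ (Finset.mem_univ 0)).symm
    rw [hsplit, hkey0,
      Finset.sum_congr rfl (fun i hi => hkey i (Finset.ne_of_mem_erase hi)),
      Finset.sum_const, Finset.card_erase_of_mem (Finset.mem_univ 0), Finset.card_univ,
      Fintype.card_fin]
    have hcast : ((n-1 : ℕ) : ℝ) = (n:ℝ) - 1 := by
      have h1 : (1:ℕ) ≤ n := by omega
      push_cast [h1]
      ring
    rw [nsmul_eq_mul, hcast]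
    ring
  -- the ODE
  have hode : ∀ r : ℝ, 0 < r → r < R →
      (n:ℝ) * deriv q (r^2) + 2*r^2 * deriv (deriv q) (r^2) = (φ r - υ r)/2 := by
    intro r hr0 hrR
    have hmemb : r • e₀ ∈ ball (0:En n) R := by
      simp only [mem_ball, dist_eq_norm, sub_zero, norm_smul, he₀n, mul_one,
        Real.norm_eq_abs, abs_of_pos hr0]
      exact hrR
    have h1 := hpde (r • e₀) hmemb
    rw [hlap r hr0 hrR] at h1
    have h2 : w (r • e₀) = φ r := rfl
    have h3 : u (r • e₀) = υ r := rfl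
    rw [h2, h3] at h1
    linarith
  -- 1d function φ
  have hφC2 : ContDiff ℝ 2 φ := hw.comp (contDiff_id.smul contDiff_const)
  have hφ'cont : Continuous (deriv φ) := hφC2.continuous_deriv (by norm_num)
  have hφcont : Continuous φ := hφC2.continuous
  have hφ'q : ∀ r : ℝ, 0 < r → deriv φ r = 2*r*deriv q (r^2) := by
    intro r hr0
    have heq : φ =ᶠ[nhds r] (fun t => q (t^2)) := by
      filter_upwards [Ioi_mem_nhds hr0] with t ht
      exact (hqφ t (le_of_lt ht)).symm
    have h2 : HasDerivAt (fun t:ℝ => q (t^2)) (deriv q (r^2) * (2*r)) r := by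
      have hin : HasDerivAt (fun t:ℝ => t^2) (2*r) r := by simpa using hasDerivAt_pow 2 r
      exact (hqd _ (mem_Ioi.2 (by positivity))).comp r hin
    rw [heq.deriv_eq, h2.deriv]; ring
  have hυcont : ContinuousOn υ (Icc 0 R) := by
    apply hu.comp ((continuous_id.smul continuous_const).continuousOn)
    intro r hr
    exact hmem r (abs_le.2 ⟨by linarith [hr.1, hR], hr.2⟩)
  set H : ℝ → ℝ := fun s => s^(n-1) * (φ s - υ s) / 2 with hHdef
  set F : ℝ → ℝ := fun r => r^n * deriv q (r^2) with hFdef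
  have hHcont : ContinuousOn H (Icc 0 R) := by
    apply ContinuousOn.div_const
    exact ((continuous_pow _).continuousOn.mul (hφcont.continuousOn.sub hυcont))
  have hFcont : ContinuousOn F (Ioi 0) := by
    apply ContinuousOn.mul (continuous_pow _).continuousOn
    apply hq'cont.comp (continuous_pow 2).continuousOn
    intro s hs
    exact pow_pos (show (0:ℝ) < s from hs) 2
  have hFd : ∀ r ∈ Ioo (0:ℝ) R, HasDerivAt F (H r) r := by
    intro r hr
    have hr0 := hr.1
    have hrR := hr.2
    have hpow : HasDerivAt (fun t:ℝ => t^n) ((n:ℝ) * r^(n-1)) r := by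
      simpa using hasDerivAt_pow n r
    have hin : HasDerivAt (fun t:ℝ => t^2) (2*r) r := by simpa using hasDerivAt_pow 2 r
    have h2 : HasDerivAt (fun t:ℝ => deriv q (t^2)) (deriv (deriv q) (r^2) * (2*r)) r :=
      (hq'd _ (mem_Ioi.2 (by positivity))).comp r hin
    have hF : HasDerivAt F ((n:ℝ)*r^(n-1) * deriv q (r^2)
        + r^n * (deriv (deriv q) (r^2) * (2*r))) r := hpow.mul h2
    have hval2 : (n:ℝ)*r^(n-1) * deriv q (r^2) + r^n * (deriv (deriv q) (r^2) * (2*r))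
        = H r := by
      have hrn : r^n = r^(n-1) * r := by
        rw [← pow_succ]
        congr 1
        omega
      have h3 := hode r hr0 hrR
      show _ = r^(n-1) * (φ r - υ r) / 2
      rw [hrn]
      linear_combination (r^(n-1)) * h3
    rw [hval2] at hF
    exact hF
  have hHint : ∀ a b : ℝ, 0 ≤ a → b ≤ R → a ≤ b → IntervalIntegrable H volume a b := by
    intro a b ha hb hab
    apply ContinuousOn.intervalIntegrable
    rw [uIcc_of_le hab]
    exact hHcont.mono (Icc_subset_Icc ha hb)
  have hsub : ∀ ε r : ℝ, 0 < ε → ε ≤ r → r ≤ R →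
      ∫ s in ε..r, H s = F r - F ε := by
    intro ε r hε hεr hrR
    apply intervalIntegral.integral_eq_sub_of_hasDeriv_right_of_le hεr
    · exact hFcont.mono (fun s hs => lt_of_lt_of_le hε hs.1)
    · intro t ht
      exact (hFd t ⟨lt_of_lt_of_le hε ht.1.le, lt_of_lt_of_le ht.2 hrR⟩).hasDerivWithinAt
    · exact hHint ε r hε.le hrR hεr
  have hFlim : Tendsto F (nhdsWithin 0 (Ioi 0)) (nhds 0) := by
    have he : ∀ ε ∈ Ioi (0:ℝ), ε^(n-1) * deriv φ ε / 2 = F ε := by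
      intro ε hε
      show _ = ε^n * deriv q (ε^2)
      rw [hφ'q ε hε]
      have hh : ε^n = ε^(n-1)*ε := by
        rw [← pow_succ]
        congr 1
        omega
      rw [hh]
      ring
    have hc : Tendsto (fun ε : ℝ => ε^(n-1) * deriv φ ε / 2) (nhdsWithin 0 (Ioi 0))
        (nhds ((0:ℝ)^(n-1) * deriv φ 0 / 2)) := by
      apply Tendsto.mono_left _ nhdsWithin_le_nhds
      exact (((continuous_pow (n-1)).mul hφ'cont).div_const 2).tendsto 0
    have h0 : (0:ℝ)^(n-1) * deriv φ 0 / 2 = 0 := by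
      rw [zero_pow (by omega : n-1 ≠ 0)]
      ring
    rw [h0] at hc
    exact hc.congr' (eventuallyEq_nhdsWithin_of_eqOn he)
  have hIlim : Tendsto (fun ε : ℝ => ∫ s in (0:ℝ)..ε, H s) (nhdsWithin 0 (Ioi 0)) (nhds 0) := by
    obtain ⟨K, hK⟩ := (isCompact_Icc : IsCompact (Icc (0:ℝ) R)).exists_bound_of_continuousOn hHcont
    have hKnn : 0 ≤ K := le_trans (norm_nonneg (H 0)) (hK 0 ⟨le_rfl, hR.le⟩)
    have hg : Tendsto (fun ε : ℝ => K * ε) (nhdsWithin 0 (Ioi 0)) (nhds 0) := by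
      have h' : Tendsto (fun ε : ℝ => K * ε) (nhdsWithin 0 (Ioi 0)) (nhds (K * 0)) :=
        ((continuous_const.mul continuous_id).tendsto 0).mono_left nhdsWithin_le_nhds
      simpa using h'
    refine squeeze_zero_norm' ?_ hg
    · filter_upwards [Ioc_mem_nhdsGT_of_mem (show (0:ℝ) ∈ Ico 0 R from ⟨le_rfl, hR⟩)] with ε hε
      have hb : ∀ s ∈ Set.uIoc (0:ℝ) ε, ‖H s‖ ≤ K := by
        intro s hs
        rw [Set.uIoc_of_le hε.1.le] at hs
        exact hK s ⟨hs.1.le, le_trans hs.2 hε.2⟩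
      calc ‖∫ s in (0:ℝ)..ε, H s‖ ≤ K * |ε - 0| :=
            intervalIntegral.norm_integral_le_of_norm_le_const hb
        _ = K * ε := by rw [sub_zero, abs_of_pos hε.1]
  have hFeq : ∀ r : ℝ, 0 < r → r ≤ R → F r = ∫ s in (0:ℝ)..r, H s := by
    intro r hr0 hrR
    have hev : ∀ᶠ ε in nhdsWithin (0:ℝ) (Ioi 0),
        F r - F ε = (∫ s in (0:ℝ)..r, H s) - ∫ s in (0:ℝ)..ε, H s := by
      filter_upwards [Ioc_mem_nhdsGT_of_mem (show (0:ℝ) ∈ Ico 0 r from ⟨le_rfl, hr0⟩)] with ε hε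
      have h1 := hsub ε r hε.1 hε.2 hrR
      have h2 : (∫ s in (0:ℝ)..ε, H s) + (∫ s in ε..r, H s) = ∫ s in (0:ℝ)..r, H s :=
        intervalIntegral.integral_add_adjacent_intervals
          (hHint 0 ε le_rfl (le_trans hε.2 hrR) hε.1.le) (hHint ε r hε.1.le hrR hε.2)
      linarith
    have hL : Tendsto (fun ε => F r - F ε) (nhdsWithin (0:ℝ) (Ioi 0)) (nhds (F r)) := by
      simpa using (tendsto_const_nhds.sub hFlim)
    have hRt : Tendsto (fun ε => (∫ s in (0:ℝ)..r, H s) - ∫ s in (0:ℝ)..ε, H s)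
        (nhdsWithin (0:ℝ) (Ioi 0)) (nhds (∫ s in (0:ℝ)..r, H s)) := by
      simpa using (tendsto_const_nhds.sub hIlim)
    have := tendsto_nhds_unique (hL.congr' hev) hRt
    linarith
  -- mass identity
  have hmass : m = σ * ∫ s in (0:ℝ)..R, s^(n-1) * υ s := by
    have key := integral_fun_norm_addHaar (volume : Measure (En n))
      (fun r => Set.indicator (Ioo 0 R) υ r)
    rw [hfr] at key
    have hleft : ∫ x : En n, Set.indicator (Ioo 0 R) υ ‖x‖ = m := by
      rw [← hm, ← integral_indicator measurableSet_ball]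
      apply integral_congr_ae
      filter_upwards [compl_mem_ae_iff.2 (measure_singleton (0:En n))] with x hx
      have hx0 : 0 < ‖x‖ := by
        simp only [mem_compl_iff, mem_singleton_iff] at hx
        exact norm_pos_iff.2 hx
      by_cases hxR : ‖x‖ < R
      · rw [Set.indicator_of_mem (show ‖x‖ ∈ Ioo (0:ℝ) R from ⟨hx0, hxR⟩),
          Set.indicator_of_mem (show x ∈ ball (0:En n) R by
            simpa [mem_ball, dist_eq_norm] using hxR)]
        show u (‖x‖ • e₀) = u x
        apply hru (‖x‖ • e₀) (hmem _ (by rw [abs_of_nonneg (norm_nonneg x)]; exact hxR.le))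
          x (by simpa [mem_closedBall, dist_eq_norm] using hxR.le)
        rw [norm_smul, he₀n, mul_one, Real.norm_eq_abs, abs_of_nonneg (norm_nonneg x)]
      · rw [Set.indicator_of_notMem (show ‖x‖ ∉ Ioo (0:ℝ) R by
            simp only [mem_Ioo, not_and]; intro _; exact hxR),
          Set.indicator_of_notMem (show x ∉ ball (0:En n) R by
            simpa [mem_ball, dist_eq_norm] using hxR)]
    rw [hleft] at key
    have hright : ∫ y in Ioi (0:ℝ), y ^ (n - 1) • Set.indicator (Ioo 0 R) υ y
        = ∫ s in (0:ℝ)..R, s^(n-1) * υ s := by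
      have h2 : ∀ y : ℝ, y ^ (n-1) • Set.indicator (Ioo 0 R) υ y
          = Set.indicator (Ioo 0 R) (fun s => s^(n-1) * υ s) y := by
        intro y
        by_cases hy : y ∈ Ioo (0:ℝ) R <;> simp [hy]
      simp only [h2]
      rw [setIntegral_indicator measurableSet_Ioo]
      have h3 : Ioi (0:ℝ) ∩ Ioo 0 R = Ioo 0 R := by
        apply inter_eq_self_of_subset_right
        intro y hy
        exact hy.1
      rw [h3, intervalIntegral.integral_of_le hR.le, integral_Ioc_eq_integral_Ioo]
    rw [hright] at key
    rw [key, nsmul_eq_mul, smul_eq_mul, hσdef, hVdef]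
    rw [measureReal_def]
    ring
  set M : ℝ := ∫ s in (0:ℝ)..R, s^(n-1) * υ s with hMdef
  have hυnn : ∀ s ∈ Icc (0:ℝ) R, 0 ≤ υ s := by
    intro s hs
    exact (hnn (s • e₀) (hmem s (abs_le.2 ⟨by linarith [hs.1, hR], hs.2⟩))).1
  have hφnn : ∀ s ∈ Icc (0:ℝ) R, 0 ≤ φ s := by
    intro s hs
    exact (hnn (s • e₀) (hmem s (abs_le.2 ⟨by linarith [hs.1, hR], hs.2⟩))).2
  have hfυint : ∀ a b : ℝ, 0 ≤ a → b ≤ R → a ≤ b →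
      IntervalIntegrable (fun s => s^(n-1) * υ s) volume a b := by
    intro a b ha hb hab
    apply ContinuousOn.intervalIntegrable
    rw [uIcc_of_le hab]
    exact ((continuous_pow _).continuousOn.mul (hυcont.mono (Icc_subset_Icc ha hb)))
  have hfφint : ∀ a b : ℝ, IntervalIntegrable (fun s => s^(n-1) * φ s) volume a b := by
    intro a b
    exact ((continuous_pow _).mul hφcont).intervalIntegrable a b
  have hMnn : 0 ≤ M := by
    apply intervalIntegral.integral_nonneg hR.le
    intro s hs
    exact mul_nonneg (pow_nonneg hs.1 _) (hυnn s hs)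
  set A : ℝ := ∫ s in (0:ℝ)..R, s^(n-1) * φ s with hAdef
  have hHsplit : ∀ a b : ℝ, 0 ≤ a → b ≤ R → a ≤ b →
      ∫ s in a..b, H s = ((∫ s in a..b, s^(n-1) * φ s) - ∫ s in a..b, s^(n-1) * υ s)/2 := by
    intro a b ha hb hab
    have h1 : ∀ s : ℝ, H s = (s^(n-1) * φ s - s^(n-1) * υ s)/2 := by
      intro s
      show s^(n-1) * (φ s - υ s) / 2 = _
      ring
    simp only [h1]
    rw [intervalIntegral.integral_div, intervalIntegral.integral_sub (hfφint a b)
      (hfυint a b ha hb hab)]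
  have hAM : A = M := by
    have h0 : F R = 0 := by
      show R^n * deriv q (R^2) = 0
      rw [hneu']
      ring
    have h1 := hFeq R hR le_rfl
    rw [h0, hHsplit 0 R le_rfl le_rfl hR.le] at h1
    rw [hAdef, hMdef]
    linarith
  have hpartial : ∀ r : ℝ, 0 < r → r ≤ R → |F r| ≤ M := by
    intro r hr0 hrR
    rw [hFeq r hr0 hrR, hHsplit 0 r le_rfl hrR hr0.le]
    have hφ1 : 0 ≤ ∫ s in (0:ℝ)..r, s^(n-1) * φ s := by
      apply intervalIntegral.integral_nonneg hr0.le
      intro s hs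
      exact mul_nonneg (pow_nonneg hs.1 _) (hφnn s ⟨hs.1, le_trans hs.2 hrR⟩)
    have hφ2 : (∫ s in (0:ℝ)..r, s^(n-1) * φ s) ≤ A := by
      apply intervalIntegral.integral_mono_interval le_rfl hr0.le hrR
      · filter_upwards [ae_restrict_mem measurableSet_Ioc] with s hs
        exact mul_nonneg (pow_nonneg hs.1.le _) (hφnn s ⟨hs.1.le, hs.2⟩)
      · exact hfφint 0 R
    have hυ1 : 0 ≤ ∫ s in (0:ℝ)..r, s^(n-1) * υ s := by
      apply intervalIntegral.integral_nonneg hr0.le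
      intro s hs
      exact mul_nonneg (pow_nonneg hs.1 _) (hυnn s ⟨hs.1, le_trans hs.2 hrR⟩)
    have hυ2 : (∫ s in (0:ℝ)..r, s^(n-1) * υ s) ≤ M := by
      apply intervalIntegral.integral_mono_interval le_rfl hr0.le hrR
      · filter_upwards [ae_restrict_mem measurableSet_Ioc] with s hs
        exact mul_nonneg (pow_nonneg hs.1.le _) (hυnn s ⟨hs.1.le, hs.2⟩)
      · exact hfυint 0 R le_rfl le_rfl hR.le
    rw [abs_le]
    constructor <;> [nlinarith [hAM]; nlinarith [hAM]]
  -- derivative of φ bound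
  have hFφ : ∀ s : ℝ, 0 < s → deriv φ s = 2 * F s / s^(n-1) := by
    intro s hs
    rw [hφ'q s hs]
    show _ = 2 * (s^n * deriv q (s^2)) / s^(n-1)
    have hsn : s^n = s^(n-1) * s := by
      rw [← pow_succ]
      congr 1
      omega
    rw [hsn]
    field_simp
  have hdφbound : ∀ s : ℝ, 0 < s → s ≤ R → |deriv φ s| ≤ 2*M/s^(n-1) := by
    intro s hs hsR
    rw [hFφ s hs, abs_div, abs_of_pos (pow_pos hs (n-1)), abs_mul, abs_two]
    gcongr
    exact hpartial s hs hsR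
  have hgradbound : ∀ x : En n, 0 < ‖x‖ → ‖x‖ ≤ R →
      |(inner ℝ x (gradient w x) : ℝ)| ≤ 2*M/‖x‖^(n-2) := by
    intro x hx0 hxR
    have h1 : (inner ℝ x (gradient w x) : ℝ) = inner ℝ (gradient w x) x := real_inner_comm _ _
    rw [h1, hgrad x hx0 hxR]
    have h2 : 2*‖x‖^2*deriv q (‖x‖^2) = 2 * F ‖x‖ / ‖x‖^(n-2) := by
      show _ = 2 * (‖x‖^n * deriv q (‖x‖^2)) / ‖x‖^(n-2)
      have hsn : ‖x‖^n = ‖x‖^(n-2) * ‖x‖^2 := by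
        rw [← pow_add]
        congr 1
        omega
      rw [hsn]
      field_simp
    rw [h2, abs_div, abs_of_pos (pow_pos hx0 (n-2)), abs_mul, abs_two]
    gcongr
    exact hpartial ‖x‖ hx0 hxR
  -- minimum of φ on [R/2, R]
  obtain ⟨ρ, hρmem, hρmin⟩ := isCompact_Icc.exists_isMinOn
    (nonempty_Icc.2 (by linarith : R/2 ≤ R))
    (hφcont.continuousOn : ContinuousOn φ (Icc (R/2) R))
  have hρpos : 0 < ρ := lt_of_lt_of_le (by linarith) hρmem.1
  have hintpow : ∫ s in (R/2)..R, s^(n-1) = (R^n - (R/2)^n)/n := by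
    rw [integral_pow]
    have h1 : n - 1 + 1 = n := by omega
    rw [h1]
    have h2 : ((n-1:ℕ):ℝ) + 1 = (n:ℝ) := by
      push_cast [show 1 ≤ n by omega]
      ring
    rw [h2]
  have hφρ : φ ρ ≤ c₀ * M := by
    have h1 : ∫ s in (R/2)..R, s^(n-1) * φ ρ ≤ ∫ s in (R/2)..R, s^(n-1) * φ s := by
      apply intervalIntegral.integral_mono_on (by linarith)
      · exact ((continuous_pow _).mul continuous_const).intervalIntegrable _ _
      · exact hfφint _ _
      · intro s hs
        have hs0 : (0:ℝ) ≤ s := by linarith [hs.1]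
        exact mul_le_mul_of_nonneg_left (hρmin hs) (pow_nonneg hs0 _)
    have h2 : ∫ s in (R/2)..R, s^(n-1) * φ ρ = (R^n - (R/2)^n)/n * φ ρ := by
      rw [intervalIntegral.integral_mul_const, hintpow]
    have h3 : ∫ s in (R/2)..R, s^(n-1) * φ s ≤ A := by
      have hsplit2 : (∫ s in (0:ℝ)..(R/2), s^(n-1)*φ s) + ∫ s in (R/2)..R, s^(n-1)*φ s = A :=
        intervalIntegral.integral_add_adjacent_intervals (hfφint _ _) (hfφint _ _)
      have h4 : 0 ≤ ∫ s in (0:ℝ)..(R/2), s^(n-1)*φ s := by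
        apply intervalIntegral.integral_nonneg (by linarith)
        intro s hs
        exact mul_nonneg (pow_nonneg hs.1 _) (hφnn s ⟨hs.1, by linarith [hs.2]⟩)
      linarith
    have h5 : (R^n - (R/2)^n)/n * φ ρ ≤ M := by
      rw [← h2]
      calc ∫ s in (R/2)..R, s^(n-1) * φ ρ ≤ ∫ s in (R/2)..R, s^(n-1) * φ s := h1
        _ ≤ A := h3
        _ = M := hAM
    rw [hc₀def, div_mul_eq_mul_div, le_div_iff₀ hRn]
    have hnpos : (0:ℝ) < n := by
      have : (4:ℝ) ≤ n := by exact_mod_cast hn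
      linarith
    rw [div_mul_eq_mul_div, div_le_iff₀ hnpos] at h5
    linarith
  -- pointwise bound for φ
  have hφbound : ∀ r : ℝ, 0 < r → r ≤ R →
      φ r ≤ c₀ * M + 2^(n-1) * 2 * M / ((n:ℝ)-2) / r^(n-2) := by
    intro r hr0 hrR
    set c := min r ρ with hcdef
    set d := max r ρ with hddef
    have hc0 : 0 < c := lt_min hr0 hρpos
    have hcd : c ≤ d := min_le_max
    have hdR : d ≤ R := max_le hrR hρmem.2
    have hcr2 : r/2 ≤ c := le_min (by linarith) (by linarith [hρmem.1])
    have hftc : ∫ s in c..d, deriv φ s = φ d - φ c := by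
      apply intervalIntegral.integral_deriv_eq_sub
      · intro s hs
        exact (hφC2.differentiable (by norm_num)).differentiableAt
      · exact (hφ'cont.intervalIntegrable _ _)
    have hG : ∀ s:ℝ, 0 < s → HasDerivAt (fun t:ℝ => -(2*M/((n:ℝ)-2)) * (t^(n-2))⁻¹)
        (2*M/s^(n-1)) s := by
      intro s hs
      have hsne : s ≠ 0 := hs.ne'
      have hpow : HasDerivAt (fun t:ℝ => t^(n-2)) (((n-2:ℕ):ℝ) * s^(n-3)) s := by
        simpa [show n-2-1 = n-3 by omega] using hasDerivAt_pow (n-2) s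
      have hinv := hpow.inv (pow_ne_zero _ hsne)
      have hmul := hinv.const_mul (-(2*M/((n:ℝ)-2)))
      refine hmul.congr_deriv ?_
      have hc2 : ((n-2:ℕ):ℝ) = (n:ℝ)-2 := by
        push_cast [show 2 ≤ n by omega]
        ring
      rw [hc2]
      have hp1 : (s^(n-2))^2 = s^(n-3) * s^(n-1) := by
        rw [← pow_mul, ← pow_add]
        congr 1
        omega
      rw [hp1]
      have hs3 : s^(n-3) ≠ 0 := pow_ne_zero _ hsne
      have hs1 : s^(n-1) ≠ 0 := pow_ne_zero _ hsne
      field_simp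
    have hcontint : IntervalIntegrable (fun s:ℝ => 2*M/s^(n-1)) volume c d := by
      apply ContinuousOn.intervalIntegrable
      rw [uIcc_of_le hcd]
      apply ContinuousOn.div continuousOn_const (continuous_pow _).continuousOn
      intro s hs
      exact pow_ne_zero _ (lt_of_lt_of_le hc0 hs.1).ne'
    have hint2 : ∫ s in c..d, 2*M/s^(n-1)
        = -(2*M/((n:ℝ)-2)) * (d^(n-2))⁻¹ + (2*M/((n:ℝ)-2)) * (c^(n-2))⁻¹ := by
      rw [intervalIntegral.integral_eq_sub_of_hasDerivAt
        (fun s hs => hG s (by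
          rw [uIcc_of_le hcd] at hs
          exact lt_of_lt_of_le hc0 hs.1)) hcontint]
      ring
    have hbound1 : |φ d - φ c| ≤ ∫ s in c..d, 2*M/s^(n-1) := by
      rw [← hftc]
      calc |∫ s in c..d, deriv φ s| ≤ ∫ s in c..d, |deriv φ s| :=
            intervalIntegral.abs_integral_le_integral_abs hcd
        _ ≤ ∫ s in c..d, 2*M/s^(n-1) := by
            apply intervalIntegral.integral_mono_on hcd
            · exact (continuous_abs.comp hφ'cont).intervalIntegrable _ _
            · exact hcontint
            · intro s hs
              exact hdφbound s (lt_of_lt_of_le hc0 hs.1) (le_trans hs.2 hdR)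
    have hcases : φ r ≤ φ ρ + |φ d - φ c| := by
      have habs : |φ d - φ c| = |φ r - φ ρ| := by
        rcases le_total r ρ with h | h
        · rw [hcdef, hddef, min_eq_left h, max_eq_right h, abs_sub_comm]
        · rw [hcdef, hddef, min_eq_right h, max_eq_left h]
      rw [habs]
      rcases abs_cases (φ r - φ ρ) with ⟨h1, _⟩ | ⟨h1, _⟩ <;> linarith
    have hcinv : (c^(n-2))⁻¹ ≤ 2^(n-2) * (r^(n-2))⁻¹ := by
      have h1 : (r/2)^(n-2) ≤ c^(n-2) := pow_le_pow_left₀ (by positivity) hcr2 _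
      have h2 : (c^(n-2))⁻¹ ≤ ((r/2)^(n-2))⁻¹ := by
        apply inv_anti₀ (by positivity) h1
      calc (c^(n-2))⁻¹ ≤ ((r/2)^(n-2))⁻¹ := h2
        _ = 2^(n-2) * (r^(n-2))⁻¹ := by
            rw [div_pow]
            field_simp
    have hd2 : (0:ℝ) ≤ (2*M/((n:ℝ)-2)) * (d^(n-2))⁻¹ := by
      have hd0 : 0 < d := lt_of_lt_of_le hc0 hcd
      positivity
    have hkey2 : φ r ≤ φ ρ + (2*M/((n:ℝ)-2)) * (c^(n-2))⁻¹ := by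
      have := hcases
      rw [hint2] at hbound1
      linarith
    have hfinal : (2*M/((n:ℝ)-2)) * (c^(n-2))⁻¹ ≤ 2^(n-1) * 2 * M / ((n:ℝ)-2) / r^(n-2) := by
      have h6 : (2*M/((n:ℝ)-2)) * (c^(n-2))⁻¹ ≤ (2*M/((n:ℝ)-2)) * (2^(n-2) * (r^(n-2))⁻¹) := by
        apply mul_le_mul_of_nonneg_left hcinv (by positivity)
      calc (2*M/((n:ℝ)-2)) * (c^(n-2))⁻¹ ≤ (2*M/((n:ℝ)-2)) * (2^(n-2) * (r^(n-2))⁻¹) := h6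
        _ = 2^(n-2) * 2 * M / ((n:ℝ)-2) / r^(n-2) := by
            have hrne : r^(n-2) ≠ 0 := (pow_pos hr0 _).ne'
            have hn2ne : ((n:ℝ)-2) ≠ 0 := hn2.ne'
            field_simp
        _ ≤ 2^(n-1) * 2 * M / ((n:ℝ)-2) / r^(n-2) := by
            have h22 : (2:ℝ)^(n-2) ≤ 2^(n-1) := pow_le_pow_right₀ one_le_two (by omega)
            have hrpos : (0:ℝ) < r^(n-2) := pow_pos hr0 _
            apply (div_le_div_iff_of_pos_right hrpos).2
            apply (div_le_div_iff_of_pos_right hn2).2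
            nlinarith [hMnn]
    linarith [hφρ]
  -- final assembly
  intro x hx0 hxR
  have hwx : w x = φ ‖x‖ := by
    rw [hval x hxR]
    exact hqφ ‖x‖ (norm_nonneg x)
  have h1 := hφbound ‖x‖ hx0 hxR
  have h2 := hgradbound x hx0 hxR
  have hrpow : ‖x‖ ^ ((n : ℝ) - 2) = ‖x‖^(n-2) := by
    rw [show ((n:ℝ) - 2) = ((n-2 : ℕ) : ℝ) by push_cast [show 2 ≤ n by omega]; ring,
      Real.rpow_natCast]
  rw [hwx, hrpow, hmass]
  have hxpow : (0:ℝ) < ‖x‖^(n-2) := pow_pos hx0 _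
  have hCσ : C * (σ * M) / ‖x‖^(n-2)
      = c₀ * R^(n-2) * M / ‖x‖^(n-2) + 2^(n-1)*2*M/((n:ℝ)-2)/‖x‖^(n-2) + 2*M/‖x‖^(n-2) := by
    rw [hCdef]
    field_simp
  rw [hCσ]
  have hc₀M : c₀ * M ≤ c₀ * R^(n-2) * M / ‖x‖^(n-2) := by
    rw [le_div_iff₀ hxpow]
    have hple : ‖x‖^(n-2) ≤ R^(n-2) := pow_le_pow_left₀ (norm_nonneg x) hxR _
    calc c₀ * M * ‖x‖^(n-2) ≤ c₀ * M * R^(n-2) :=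
          mul_le_mul_of_nonneg_left hple (mul_nonneg hc₀.le hMnn)
      _ = c₀ * R^(n-2) * M := by ring
  linarith
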